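/- Let v ∈ H with v ≠ 0, let α = arsinh(‖v‖) (so sinh α = ‖v‖) and u = (α/‖v‖)·v. Then exp(U_u) = T_v. In particular, every boost on ℋ = ℝ × H is the exponential of an operator of the form U_u with u ∈ H. -/

import Mathlib

open scoped RealInnerProductSpace

set_option synthInstance.maxHeartbeats 400000
set_option maxHeartbeats 1000000

noncomputable section

variable {H : Type*} [NormedAddCommGroup H] [InnerProductSpace ℝ H]

/-- The rank-one operator `a ⊗ b : x ↦ ⟪b,x⟫ • a`. -/
def rankOne (a b : H) : H →L[ℝ] H := (innerSL ℝ b).smulRight a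

/-- The boost `T_v` associated with a vector `v`, with the convention `T_0 = id`. -/
def boost (v : H) : (ℝ × H) →L[ℝ] (ℝ × H) :=
  letI : Decidable (v = 0) := Classical.dec _
  if v = 0 then ContinuousLinearMap.id ℝ (ℝ × H)
  else
    ((Real.sqrt (1 + ‖v‖ ^ 2) • ContinuousLinearMap.fst ℝ ℝ H +
        (innerSL ℝ v).comp (ContinuousLinearMap.snd ℝ ℝ H)).prod
      ((ContinuousLinearMap.fst ℝ ℝ H).smulRight v +
        (ContinuousLinearMap.id ℝ H +
            ((Real.sqrt (1 + ‖v‖ ^ 2) - 1) / ‖v‖ ^ 2) • rankOne v v).comp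
          (ContinuousLinearMap.snd ℝ ℝ H)))

/-- The operator `U_u (s,x) = (⟪u,x⟫, s•u)` on `ℝ × H`. -/
def Uop (u : H) : (ℝ × H) →L[ℝ] (ℝ × H) :=
  ((innerSL ℝ u).comp (ContinuousLinearMap.snd ℝ ℝ H)).prod
    ((ContinuousLinearMap.fst ℝ ℝ H).smulRight u)

instance : IsTopologicalRing ((ℝ × H) →L[ℝ] (ℝ × H)) :=
  @NonUnitalSeminormedRing.toIsTopologicalRing ((ℝ × H) →L[ℝ] (ℝ × H)) _

lemma Uop_apply (u : H) (p : ℝ × H) : Uop u p = (⟪u, p.2⟫, p.1 • u) := rfl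

lemma Uop_sq (u : H) (p : ℝ × H) : (Uop u ^ 2) p = (‖u‖^2 * p.1, ⟪u, p.2⟫ • u) := by
  simp [pow_two, ContinuousLinearMap.mul_apply, Uop_apply, real_inner_smul_right,
    real_inner_self_eq_norm_sq, mul_comm]

lemma Uop_cube (u : H) : Uop u ^ 3 = (‖u‖^2) • Uop u := by
  refine ContinuousLinearMap.ext fun p => Prod.ext ?_ ?_ <;>
    rw [show (3:ℕ) = 2 + 1 by rfl, pow_succ] <;>
    simp [ContinuousLinearMap.mul_apply, Uop_sq, Uop_apply, real_inner_smul_right,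
      real_inner_self_eq_norm_sq, smul_smul, mul_comm]

lemma Uop_pow_odd (u : H) (k : ℕ) : Uop u ^ (2*k+1) = ((‖u‖^2)^k) • Uop u := by
  induction k with
  | zero => simp
  | succ k ih =>
    rw [show 2*(k+1)+1 = (2*k+1) + 2 by ring, pow_add, ih, smul_mul_assoc,
      ← pow_succ' (Uop u) 2, Uop_cube, smul_smul, ← pow_succ]

lemma Uop_pow_even (u : H) (k : ℕ) : Uop u ^ (2*(k+1)) = ((‖u‖^2)^k) • Uop u ^ 2 := by
  rw [show 2*(k+1) = (2*k+1) + 1 by ring, pow_succ, Uop_pow_odd, smul_mul_assoc, ← pow_two]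

lemma Uop_sq' (u : H) (p : ℝ × H) : (Uop u ^ 2) p = (⟪u, u⟫ * p.1, ⟪u, p.2⟫ • u) := by
  simp [pow_two, ContinuousLinearMap.mul_apply, Uop_apply, real_inner_smul_right, mul_comm]

lemma closed_form (v : H) (hv : v ≠ 0) (α : ℝ) (hα : α ≠ 0) :
    ((Real.sqrt (1 + ‖v‖ ^ 2) - 1) / α^2) • (Uop ((α/‖v‖)•v))^2 + 1
      + (‖v‖/α) • Uop ((α/‖v‖)•v) = boost v := by
  have h2 : ‖v‖ ≠ 0 := norm_ne_zero_iff.2 hv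
  refine ContinuousLinearMap.ext fun p => Prod.ext ?_ ?_
  · simp only [boost, hv, if_false, ContinuousLinearMap.add_apply, ContinuousLinearMap.smul_apply,
      ContinuousLinearMap.one_apply, ContinuousLinearMap.prod_apply, ContinuousLinearMap.comp_apply,
      ContinuousLinearMap.coe_fst', ContinuousLinearMap.coe_snd', ContinuousLinearMap.smulRight_apply,
      ContinuousLinearMap.coe_id', id_eq, innerSL_apply_apply, rankOne, Uop_sq', Uop_apply,
      real_inner_smul_left, real_inner_smul_right, real_inner_self_eq_norm_sq, norm_smul, Real.norm_eq_abs, mul_pow, sq_abs,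
      Prod.fst_add, Prod.snd_add, Prod.smul_fst, Prod.smul_snd, smul_eq_mul]
    field_simp
    ring
  · simp only [boost, hv, if_false, ContinuousLinearMap.add_apply, ContinuousLinearMap.smul_apply,
      ContinuousLinearMap.one_apply, ContinuousLinearMap.prod_apply, ContinuousLinearMap.comp_apply,
      ContinuousLinearMap.coe_fst', ContinuousLinearMap.coe_snd', ContinuousLinearMap.smulRight_apply,
      ContinuousLinearMap.coe_id', id_eq, innerSL_apply_apply, rankOne, Uop_sq', Uop_apply,
      real_inner_smul_left, real_inner_smul_right, real_inner_self_eq_norm_sq, norm_smul, Real.norm_eq_abs, mul_pow, sq_abs,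
      Prod.fst_add, Prod.snd_add, Prod.smul_fst, Prod.smul_snd, smul_eq_mul]
    match_scalars
    · field_simp
      ring
    · ring

open Nat in
lemma exp_Uop_aux [CompleteSpace H] (v : H) (hv : v ≠ 0) :
    NormedSpace.exp (Uop ((Real.arsinh ‖v‖ / ‖v‖) • v)) = boost v := by
  set α := Real.arsinh ‖v‖ with hαdef
  set u : H := (α / ‖v‖) • v with hudef
  have hvpos : (0:ℝ) < ‖v‖ := norm_pos_iff.2 hv
  have hαpos : 0 < α := Real.arsinh_pos_iff.2 hvpos
  have hα : α ≠ 0 := ne_of_gt hαpos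
  have hsinh : Real.sinh α = ‖v‖ := Real.sinh_arsinh _
  have hcosh : Real.cosh α = Real.sqrt (1 + ‖v‖^2) := Real.cosh_arsinh _
  have hun : ‖u‖ = α := by
    rw [hudef, norm_smul, Real.norm_eq_abs, abs_div, abs_of_pos hαpos,
      abs_of_pos hvpos, div_mul_cancel₀ _ (ne_of_gt hvpos)]
  have hodd : HasSum (fun k : ℕ => (((2*k+1)! : ℝ)⁻¹) • (Uop u)^(2*k+1)) ((Real.sinh α / α) • Uop u) := by
    have h := ((Real.hasSum_sinh α).div_const α).smul_const (Uop u)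
    refine HasSum.congr_fun h fun k => ?_
    rw [Uop_pow_odd, hun, smul_smul, ← pow_mul]
    congr 1
    have : ((2*k+1)! : ℝ) ≠ 0 := Nat.cast_ne_zero.2 (Nat.factorial_ne_zero _)
    field_simp
    ring
  have heven : HasSum (fun k : ℕ => (((2*k)! : ℝ)⁻¹) • (Uop u)^(2*k))
      (((Real.cosh α - 1) / α^2) • (Uop u)^2 + 1) := by
    have hc1 : HasSum (fun k : ℕ => α^(2*(k+1))/(2*(k+1))!) (Real.cosh α - 1) := by
      refine (hasSum_nat_add_iff (f := fun n : ℕ => α^(2*n)/(2*n)!) 1).2 ?_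
      simpa using Real.hasSum_cosh α
    have h := (hc1.div_const (α^2)).smul_const ((Uop u)^2)
    have h2 : HasSum (fun k : ℕ => (((2*(k+1))! : ℝ)⁻¹) • (Uop u)^(2*(k+1)))
        (((Real.cosh α - 1) / α^2) • (Uop u)^2) := by
      refine HasSum.congr_fun h fun k => ?_
      rw [Uop_pow_even, hun, smul_smul, ← pow_mul]
      congr 1
      have : ((2*(k+1))! : ℝ) ≠ 0 := Nat.cast_ne_zero.2 (Nat.factorial_ne_zero _)
      field_simp
      ring
    have := (hasSum_nat_add_iff (f := fun k : ℕ => (((2*k)! : ℝ)⁻¹) • (Uop u)^(2*k)) 1).1 h2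
    simpa using this
  have htot : HasSum (fun n : ℕ => ((n ! : ℝ)⁻¹) • (Uop u)^n)
      ((((Real.cosh α - 1) / α^2) • (Uop u)^2 + 1) + (Real.sinh α / α) • Uop u) :=
    HasSum.even_add_odd heven hodd
  have hexp : NormedSpace.exp (Uop u) =
      (((Real.cosh α - 1) / α^2) • (Uop u)^2 + 1) + (Real.sinh α / α) • Uop u := by
    rw [NormedSpace.exp_eq_tsum (𝕂 := ℝ)]
    exact htot.tsum_eq
  rw [hexp, hcosh, hsinh, hudef]
  exact closed_form v hv α hα

/-- For `v ≠ 0`, `α = arsinh ‖v‖` and `u = (α/‖v‖) • v`, one has `exp (U_u) = T_v`.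
In particular every boost is the exponential of an operator of the form `U_u`. -/
theorem exp_Uop_eq_boost [CompleteSpace H]
    (v : H) (hv : v ≠ 0) (α : ℝ) (hα : α = Real.arsinh ‖v‖)
    (u : H) (hu : u = (α / ‖v‖) • v) :
    NormedSpace.exp (Uop u) = boost v ∧
      ∀ w : H, ∃ u' : H, NormedSpace.exp (Uop u') = boost w := by
  constructor
  · rw [hu, hα]
    exact exp_Uop_aux v hv
  · intro w
    by_cases hw : w = 0
    · refine ⟨0, ?_⟩
      have : Uop (0 : H) = 0 := by
        refine ContinuousLinearMap.ext fun p => ?_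
        simp [Uop_apply]
      rw [this, hw, NormedSpace.exp_zero, boost]
      simp [ContinuousLinearMap.one_def]
    · exact ⟨_, exp_Uop_aux w hw⟩
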